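/- For any two subspaces V, W ∈ Gr₂(n,k), the inner product of the subspace states satisfies ⟨V|W⟩ = 2^{dim(V ∩ W) − k}. -/

import Mathlib

open scoped Classical in
/-- The subspace state `|W⟩ = 2^{-k/2} ∑_{u ∈ W} |u⟩` in `(ℂ²)^{⊗n}`, identified with
`EuclideanSpace ℂ (Fin n → ZMod 2)` via the computational basis `{|v⟩ : v ∈ 𝔽₂ⁿ}`. -/
noncomputable def subspaceState {n : ℕ} (W : Submodule (ZMod 2) (Fin n → ZMod 2)) :
    EuclideanSpace ℂ (Fin n → ZMod 2) :=
  (((Real.sqrt 2 : ℝ) : ℂ) ^ (Module.finrank (ZMod 2) W))⁻¹ •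
    ∑ u : W, EuclideanSpace.single (u : Fin n → ZMod 2) (1 : ℂ)

open scoped Classical in
lemma inner_sums {n : ℕ} (V W : Submodule (ZMod 2) (Fin n → ZMod 2)) :
    (inner ℂ (∑ u : V, EuclideanSpace.single (u : Fin n → ZMod 2) (1 : ℂ))
      (∑ u : W, EuclideanSpace.single (u : Fin n → ZMod 2) (1 : ℂ)) : ℂ) =
      (Fintype.card ↥(V ⊓ W) : ℂ) := by
  rw [sum_inner]
  simp only [EuclideanSpace.inner_single_left, map_one, one_mul]
  have key : ∀ u : V, ((∑ w : W, EuclideanSpace.single (w : Fin n → ZMod 2) (1 : ℂ)) (u : Fin n → ZMod 2))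
      = if (u : Fin n → ZMod 2) ∈ W then 1 else 0 := by
    intro u
    rw [WithLp.ofLp_sum, Finset.sum_apply]
    simp only [EuclideanSpace.single_apply]
    by_cases h : (u : Fin n → ZMod 2) ∈ W
    · rw [if_pos h]
      rw [Finset.sum_eq_single (⟨_, h⟩ : W)]
      · simp
      · intro b _ hb
        rw [if_neg]
        intro hc
        exact hb (Subtype.ext hc.symm)
      · simp
    · rw [if_neg h]
      apply Finset.sum_eq_zero
      intro x _
      rw [if_neg]
      rintro hc
      exact h (hc ▸ x.2)
  simp only [key]
  rw [Finset.sum_boole]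
  norm_num
  rw [← Fintype.card_subtype]
  exact Fintype.card_congr
    ⟨fun u => ⟨↑u.1, u.1.2, u.2⟩, fun x => ⟨⟨x.1, x.2.1⟩, x.2.2⟩, fun _ => rfl, fun _ => rfl⟩

/-- For `V, W ∈ Gr₂(n,k)`, the inner product of the subspace states is
`⟨V|W⟩ = 2^{dim(V ∩ W) - k}`. -/
theorem inner_subspaceState_subspaceState {n k : ℕ}
    (V W : Submodule (ZMod 2) (Fin n → ZMod 2))
    (hV : Module.finrank (ZMod 2) V = k) (hW : Module.finrank (ZMod 2) W = k) :
    (inner ℂ (subspaceState V) (subspaceState W) : ℂ) =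
      (2 : ℂ) ^ ((Module.finrank (ZMod 2) ↥(V ⊓ W) : ℤ) - (k : ℤ)) := by
  classical
  unfold subspaceState
  rw [hV, hW, inner_smul_left, inner_smul_right, inner_sums]
  set d := Module.finrank (ZMod 2) ↥(V ⊓ W) with hd
  have hcard : (Fintype.card ↥(V ⊓ W) : ℂ) = 2 ^ d := by
    rw [hd, Module.card_eq_pow_finrank (K := ZMod 2), ZMod.card]
    push_cast; ring
  rw [hcard]
  have hconj : (starRingEnd ℂ) ((((Real.sqrt 2 : ℝ) : ℂ) ^ k)⁻¹)
      = ((((Real.sqrt 2 : ℝ) : ℂ)) ^ k)⁻¹ := by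
    rw [map_inv₀, map_pow, Complex.conj_ofReal]
  rw [hconj]
  have h2 : (((Real.sqrt 2 : ℝ) : ℂ)) ^ k * (((Real.sqrt 2 : ℝ) : ℂ)) ^ k = 2 ^ k := by
    have : (((Real.sqrt 2 : ℝ) : ℂ)) * (((Real.sqrt 2 : ℝ) : ℂ)) = 2 := by
      norm_cast
      exact Real.mul_self_sqrt (by norm_num)
    rw [← mul_pow, this]
  have hne : (((Real.sqrt 2 : ℝ) : ℂ)) ^ k ≠ 0 := by
    apply pow_ne_zero
    simp [Real.sqrt_eq_zero']
  rw [zpow_sub₀ (two_ne_zero), zpow_natCast, zpow_natCast]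
  field_simp
  rw [← h2]
  try ring
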